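/- Let G be a finite group and f : G → ℝ be ε-almost integer-valued with ε ≤ 1/4 and ‖f‖_∞ ≤ M. Let H ≤ G and suppose (f ∗ m_H)_ℤ(x) ≠ 0 implies |f ∗ m_H(x)| ≥ 3/4 and f ∗ m_H is 1/4-almost integer-valued. Then |supp (f ∗ m_H)_ℤ| ≤ 2M |supp f_ℤ|. -/

import Mathlib

open scoped BigOperators Pointwise

/-- Convolution with the uniform probability measure on a subgroup `H`:
`f ∗ m_H (x) = (1/|H|) ∑_{h ∈ H} f(xh)`. -/
noncomputable def convMH {G : Type*} [Group G] [Fintype G] (f : G → ℝ)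
    (H : Subgroup G) [Fintype H] : G → ℝ :=
  fun x => (∑ h : H, f (x * (h : G))) / (Fintype.card H : ℝ)

/-- Support-size bound: `|supp (f ∗ m_H)_ℤ| ≤ 2M |supp f_ℤ|`. -/
theorem supp_convMH_le {G : Type*} [Group G] [Fintype G] [DecidableEq G]
    (f : G → ℝ) (fZ : G → ℤ) (ε M : ℝ) (hε : ε ≤ 1 / 4)
    (hf : ∀ x, |f x - fZ x| < ε) (hM : ∀ x, |f x| ≤ M)
    (H : Subgroup G) [Fintype H]
    (gZ : G → ℤ) (hgZ : ∀ x, |convMH f H x - gZ x| < 1 / 4)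
    (hbig : ∀ x, gZ x ≠ 0 → 3 / 4 ≤ |convMH f H x|) :
    ((Finset.univ.filter fun x => gZ x ≠ 0).card : ℝ) ≤
      2 * M * ((Finset.univ.filter fun x => fZ x ≠ 0).card : ℝ) := by
  classical
  have hM0 : 0 ≤ M := le_trans (abs_nonneg _) (hM 1)
  set N := Fintype.card H with hN
  have hNpos : 0 < N := Fintype.card_pos
  have hNR : 0 < (N : ℝ) := by exact_mod_cast hNpos
  set S := Finset.univ.filter fun x => gZ x ≠ 0 with hS
  set T := Finset.univ.filter fun x => fZ x ≠ 0 with hT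
  -- per-coset bound
  have key : ∀ x ∈ S, (N : ℝ) ≤
      2 * M * ((Finset.univ.filter fun h : H => fZ (x * (h : G)) ≠ 0).card : ℝ) := by
    intro x hx
    have hxg : gZ x ≠ 0 := (Finset.mem_filter.mp hx).2
    have h34 : (3:ℝ)/4 ≤ |convMH f H x| := hbig x hxg
    set n := (Finset.univ.filter fun h : H => fZ (x * (h : G)) ≠ 0).card with hn
    have hterm : ∀ h : H, |f (x * (h : G))| ≤
        (if fZ (x * (h : G)) ≠ 0 then M else (1:ℝ)/4) := by
      intro h
      by_cases hz : fZ (x * (h : G)) ≠ 0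
      · simp [hz, hM _]
      · simp only [hz, if_false]
        push_neg at hz
        have := hf (x * (h : G))
        rw [hz] at this
        simp only [Int.cast_zero, sub_zero] at this
        linarith
    have hsum1 : |∑ h : H, f (x * (h : G))| ≤ ∑ h : H,
        (if fZ (x * (h : G)) ≠ 0 then M else (1:ℝ)/4) :=
      le_trans (Finset.abs_sum_le_sum_abs _ _) (Finset.sum_le_sum fun h _ => hterm h)
    have hnN : n ≤ N := le_trans (Finset.card_filter_le _ _) (by simp [hN])
    have huniv : (Finset.univ : Finset H).card = N := rfl
    have hadd := Finset.card_filter_add_card_filter_not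
      (s := (Finset.univ : Finset H)) (p := fun h : H => fZ (x * (h : G)) ≠ 0)
    have hcard : (Finset.univ.filter fun h : H => ¬ fZ (x * (h : G)) ≠ 0).card = N - n := by
      rw [huniv, ← hn] at hadd; omega
    have hsum2 : ∑ h : H, (if fZ (x * (h : G)) ≠ 0 then M else (1:ℝ)/4)
        = M * n + ((1:ℝ)/4) * ((N:ℝ) - (n:ℝ)) := by
      rw [Finset.sum_ite, Finset.sum_const, Finset.sum_const, hcard, ← hn,
        nsmul_eq_mul, nsmul_eq_mul, Nat.cast_sub hnN]
      ring
    have hconv : |convMH f H x| = |∑ h : H, f (x * (h : G))| / (N : ℝ) := by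
      rw [convMH, abs_div, abs_of_pos hNR]
    have hineq : (3:ℝ)/4 * N ≤ M * n + ((1:ℝ)/4) * ((N:ℝ) - (n:ℝ)) := by
      rw [hconv] at h34
      calc (3:ℝ)/4 * N ≤ |∑ h : H, f (x * (h : G))| := (le_div_iff₀ hNR).mp h34
        _ ≤ _ := by rw [← hsum2]; exact hsum1
    have hn0 : (0:ℝ) ≤ (n:ℝ) := Nat.cast_nonneg n
    nlinarith [hNR]
  -- double counting
  have hswap : ∑ x ∈ S, ((Finset.univ.filter fun h : H => fZ (x * (h : G)) ≠ 0).card)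
      ≤ N * T.card := by
    have : ∑ x ∈ S, ((Finset.univ.filter fun h : H => fZ (x * (h : G)) ≠ 0).card)
        = ∑ h : H, (S.filter fun x => fZ (x * (h : G)) ≠ 0).card := by
      simp only [Finset.card_filter]
      rw [Finset.sum_comm]
    rw [this]
    calc ∑ h : H, (S.filter fun x => fZ (x * (h : G)) ≠ 0).card
        ≤ ∑ _h : H, T.card := by
          apply Finset.sum_le_sum
          intro h _
          apply Finset.card_le_card_of_injOn (fun x => x * (h : G))
          · intro x hx
            simp only [hT, Finset.mem_coe, Finset.mem_filter, Finset.mem_univ, true_and]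
            exact (Finset.mem_filter.mp (Finset.mem_coe.mp hx)).2
          · intro a _ b _ hab
            exact mul_right_cancel hab
      _ = N * T.card := by simp [hN, mul_comm]
  -- combine
  have hfin : (S.card : ℝ) * N ≤ 2 * M * (N * T.card) := by
    calc (S.card : ℝ) * N = ∑ _x ∈ S, (N : ℝ) := by
          rw [Finset.sum_const, nsmul_eq_mul, mul_comm]
      _ ≤ ∑ x ∈ S, 2 * M *
            ((Finset.univ.filter fun h : H => fZ (x * (h : G)) ≠ 0).card : ℝ) :=
          Finset.sum_le_sum key
      _ = 2 * M * ∑ x ∈ S,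
            ((Finset.univ.filter fun h : H => fZ (x * (h : G)) ≠ 0).card : ℝ) := by
          rw [Finset.mul_sum]
      _ ≤ 2 * M * (N * T.card) := by
          apply mul_le_mul_of_nonneg_left _ (by linarith)
          push_cast
          exact_mod_cast hswap
  have : (S.card : ℝ) * N ≤ (2 * M * T.card) * N := by
    calc (S.card : ℝ) * N ≤ 2 * M * (N * T.card) := hfin
      _ = (2 * M * T.card) * N := by ring
  exact le_of_mul_le_mul_right this hNR
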